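/- The open set D := {(S₁,S₂) ∈ ℝ≥0 × ℝ≥0 : 0 < S₁ + S₂ < M} is positively invariant for the system Ṡ₁ = −u f(S₁), Ṡ₂ = u f(S₁) − μ(S₂)(M − S₁ − S₂), for any measurable control u with values in [0,1]. -/

import Mathlib

open Set

lemma signpres (x dx : ℝ → ℝ) (a b K δ : ℝ) (hδ : 0 < δ)
    (hc : ContinuousOn x (Icc a b))
    (hd : ∀ t ∈ Ioo a b, HasDerivAt x (dx t) t)
    (hi : ∀ t ∈ Ioo a b, -δ ≤ x t → x t ≤ 0 → K * x t ≤ dx t)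
    (h0 : 0 ≤ x a) : ∀ t ∈ Icc a b, 0 ≤ x t := by
  by_contra h
  push_neg at h
  obtain ⟨t₀, ht₀, hx₀⟩ := h
  set c := min δ (-x t₀) with hcdef
  have hc0 : 0 < c := lt_min hδ (by linarith)
  have hcδ : c ≤ δ := min_le_left _ _
  have hsub : Icc a t₀ ⊆ Icc a b := Icc_subset_Icc le_rfl ht₀.2
  have hScl : IsClosed {t | t ∈ Icc a t₀ ∧ x t ≤ -c} := by
    have he : {t | t ∈ Icc a t₀ ∧ x t ≤ -c} = Icc a t₀ ∩ x ⁻¹' Iic (-c) := rfl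
    rw [he]
    exact (hc.mono hsub).preimage_isClosed_of_isClosed isClosed_Icc isClosed_Iic
  have hScomp : IsCompact {t | t ∈ Icc a t₀ ∧ x t ≤ -c} :=
    isCompact_Icc.of_isClosed_subset hScl (fun t ht => ht.1)
  have hSne : {t | t ∈ Icc a t₀ ∧ x t ≤ -c}.Nonempty := by
    refine ⟨t₀, ⟨ht₀.1, le_rfl⟩, ?_⟩
    have := min_le_right δ (-x t₀)
    linarith
  obtain ⟨⟨⟨hat₁, ht₁t₀⟩, hxt₁⟩⟩ : ∃ _ : sInf {t | t ∈ Icc a t₀ ∧ x t ≤ -c} ∈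
      {t | t ∈ Icc a t₀ ∧ x t ≤ -c}, True := ⟨hScomp.sInf_mem hSne, trivial⟩
  set t₁ := sInf {t | t ∈ Icc a t₀ ∧ x t ≤ -c} with ht₁def
  have hat₁' : a < t₁ := lt_of_le_of_ne hat₁ (by intro h; rw [← h] at hxt₁; linarith)
  have hpre : ∀ t, a ≤ t → t < t₁ → -c < x t := by
    intro t hat htt₁
    by_contra hcon
    push_neg at hcon
    have : t₁ ≤ t := csInf_le hScomp.bddBelow ⟨⟨hat, htt₁.le.trans ht₁t₀⟩, hcon⟩
    linarith
  -- s := last time before t₁ with x ≥ 0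
  have hsub2 : Icc a t₁ ⊆ Icc a b := Icc_subset_Icc le_rfl (ht₁t₀.trans ht₀.2)
  have hS₀cl : IsClosed {t | t ∈ Icc a t₁ ∧ 0 ≤ x t} := by
    have he : {t | t ∈ Icc a t₁ ∧ 0 ≤ x t} = Icc a t₁ ∩ x ⁻¹' Ici 0 := rfl
    rw [he]
    exact (hc.mono hsub2).preimage_isClosed_of_isClosed isClosed_Icc isClosed_Ici
  have hS₀comp : IsCompact {t | t ∈ Icc a t₁ ∧ 0 ≤ x t} :=
    isCompact_Icc.of_isClosed_subset hS₀cl (fun t ht => ht.1)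
  have hS₀ne : {t | t ∈ Icc a t₁ ∧ 0 ≤ x t}.Nonempty := ⟨a, ⟨le_rfl, hat₁⟩, h0⟩
  obtain ⟨⟨⟨has, hst₁⟩, hxs⟩⟩ : ∃ _ : sSup {t | t ∈ Icc a t₁ ∧ 0 ≤ x t} ∈
      {t | t ∈ Icc a t₁ ∧ 0 ≤ x t}, True := ⟨hS₀comp.sSup_mem hS₀ne, trivial⟩
  set s := sSup {t | t ∈ Icc a t₁ ∧ 0 ≤ x t} with hsdef
  have hst₁' : s < t₁ := lt_of_le_of_ne hst₁ (by intro h; rw [h] at hxs; linarith)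
  have hneg : ∀ t, s < t → t < t₁ → x t < 0 := by
    intro t hst htt₁
    by_contra hcon
    push_neg at hcon
    have : t ≤ s := le_csSup hS₀comp.bddAbove ⟨⟨has.trans hst.le, htt₁.le⟩, hcon⟩
    linarith
  -- monotonicity of g := x * exp (-K t) on [s, t₁]
  set g : ℝ → ℝ := fun t => x t * Real.exp (-K * t) with hgdef
  have hsubst : Icc s t₁ ⊆ Icc a b := Icc_subset_Icc has (ht₁t₀.trans ht₀.2)
  have hgc : ContinuousOn g (Icc s t₁) :=
    (hc.mono hsubst).mul (Real.continuous_exp.comp (continuous_const.mul continuous_id)).continuousOn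
  have hgd : ∀ t ∈ Ioo s t₁, HasDerivAt g
      (dx t * Real.exp (-K * t) + x t * (Real.exp (-K * t) * -K)) t := by
    intro t ht
    have htab : t ∈ Ioo a b := ⟨has.trans_lt ht.1, ht.2.trans_le (ht₁t₀.trans ht₀.2)⟩
    have h1 : HasDerivAt (fun y : ℝ => -K * y) (-K) t := by
      simpa using (hasDerivAt_id t).const_mul (-K)
    have h2 : HasDerivAt (fun y : ℝ => Real.exp (-K * y)) (Real.exp (-K * t) * -K) t := h1.exp
    exact (hd t htab).mul h2
  have hmono : MonotoneOn g (Icc s t₁) := by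
    apply monotoneOn_of_deriv_nonneg (convex_Icc s t₁) hgc
    · intro t ht
      rw [interior_Icc] at ht
      exact ((hgd t ht).differentiableAt).differentiableWithinAt
    · intro t ht
      rw [interior_Icc] at ht
      rw [(hgd t ht).deriv]
      have htab : t ∈ Ioo a b := ⟨has.trans_lt ht.1, ht.2.trans_le (ht₁t₀.trans ht₀.2)⟩
      have hx1 : -c < x t := hpre t (has.trans ht.1.le) ht.2
      have hx2 : x t < 0 := hneg t ht.1 ht.2
      have hKx : K * x t ≤ dx t := hi t htab (by linarith) hx2.le
      have he := Real.exp_pos (-K * t)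
      nlinarith
  have hfin : g s ≤ g t₁ := hmono ⟨le_rfl, hst₁⟩ ⟨hst₁, le_rfl⟩ hst₁
  have h1 : 0 ≤ g s := mul_nonneg hxs (Real.exp_pos _).le
  have h2 : g t₁ < 0 :=
    mul_neg_of_neg_of_pos (by linarith) (Real.exp_pos _)
  linarith



set_option maxHeartbeats 1000000 in
/-- D := {(S₁,S₂) : S₁,S₂ ≥ 0, 0 < S₁+S₂ < M} is positively invariant. -/
theorem stmt2 (M : ℝ) (hM : 0 < M) (f μ u S₁ S₂ : ℝ → ℝ)
    (hf_lip : LocallyLipschitz f) (hf_mono : MonotoneOn f (Ici 0)) (hf0 : f 0 = 0)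
    (hμ_lip : LocallyLipschitz μ) (hμ_nonneg : ∀ x ∈ Ici (0:ℝ), 0 ≤ μ x) (hμ0 : μ 0 = 0)
    (hum : Measurable u) (hu : ∀ t, u t ∈ Icc (0:ℝ) 1)
    (hS₁ : ∀ t ∈ Ici (0:ℝ), HasDerivAt S₁ (-(u t) * f (S₁ t)) t)
    (hS₂ : ∀ t ∈ Ici (0:ℝ),
      HasDerivAt S₂ (u t * f (S₁ t) - μ (S₂ t) * (M - S₁ t - S₂ t)) t)
    (h0 : 0 ≤ S₁ 0 ∧ 0 ≤ S₂ 0 ∧ 0 < S₁ 0 + S₂ 0 ∧ S₁ 0 + S₂ 0 < M) :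
    ∀ t ∈ Ici (0:ℝ),
      0 ≤ S₁ t ∧ 0 ≤ S₂ t ∧ 0 < S₁ t + S₂ t ∧ S₁ t + S₂ t < M := by
  obtain ⟨h01, h02, h0N, h0M⟩ := h0
  -- local linear bounds for f and μ near 0
  have getlin : ∀ g : ℝ → ℝ, LocallyLipschitz g → g 0 = 0 →
      ∃ K δ : ℝ, 0 ≤ K ∧ 0 < δ ∧ ∀ x : ℝ, |x| ≤ δ → |g x| ≤ K * |x| := by
    intro g hg hg0
    obtain ⟨K, t, ht, hK⟩ := hg 0
    obtain ⟨δ, hδ, hball⟩ := Metric.mem_nhds_iff.mp ht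
    refine ⟨K, δ/2, K.2, by linarith, fun x hx => ?_⟩
    have hxt : x ∈ t := hball (by
      simp only [Metric.mem_ball, Real.dist_eq, sub_zero]
      calc |x| ≤ δ/2 := hx
        _ < δ := by linarith)
    have h0t : (0:ℝ) ∈ t := hball (by simpa using hδ)
    have := hK.dist_le_mul x hxt 0 h0t
    simpa [hg0, Real.dist_eq] using this
  obtain ⟨Kf, δf, hKf0, hδf, hKf⟩ := getlin f hf_lip hf0
  obtain ⟨Kμ, δμ, hKμ0, hδμ, hKμ⟩ := getlin μ hμ_lip hμ0
  have hfpos : ∀ y : ℝ, 0 ≤ y → 0 ≤ f y := fun y hy => by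
    have := hf_mono (self_mem_Ici) (mem_Ici.mpr hy) hy
    rwa [hf0] at this
  -- the total quantity N and its derivative
  set N : ℝ → ℝ := fun t => S₁ t + S₂ t with hNdef
  set dN : ℝ → ℝ := fun t => -(μ (S₂ t) * (M - N t)) with hdNdef
  have hN : ∀ t ∈ Ici (0:ℝ), HasDerivAt N (dN t) t := by
    intro t ht
    have h := (hS₁ t ht).add (hS₂ t ht)
    convert h using 1
    · rfl
    · rfl
    · rfl
    simp only [hdNdef, hNdef]
    ring
  -- key 1 : S₁ stays nonneg on any forward interval
  have key1 : ∀ a b : ℝ, 0 ≤ a → 0 ≤ S₁ a → ∀ t ∈ Icc a b, 0 ≤ S₁ t := by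
    intro a b ha ha1
    apply signpres S₁ (fun t => -(u t) * f (S₁ t)) a b Kf δf hδf
    · intro t ht
      exact ((hS₁ t (ha.trans ht.1)).continuousAt).continuousWithinAt
    · intro t ht
      exact hS₁ t (le_of_lt (ha.trans_lt ht.1))
    · intro t _ hge hle
      have habs : |S₁ t| ≤ δf := abs_le.mpr ⟨hge, hle.trans hδf.le⟩
      have h1 := hKf _ habs
      have h2 : |S₁ t| = -(S₁ t) := abs_of_nonpos hle
      have hut := hu t
      have h3 : f (S₁ t) ≤ |f (S₁ t)| := le_abs_self _
      have h4 : u t * f (S₁ t) ≤ |f (S₁ t)| := by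
        rcases le_or_gt (f (S₁ t)) 0 with hf' | hf'
        · nlinarith [abs_nonneg (f (S₁ t)), hut.1, hut.2]
        · nlinarith [hut.1, hut.2]
      rw [h2] at h1
      nlinarith
    · exact ha1
  -- key 2 : S₂ stays nonneg given S₁ ≥ 0 and 0 ≤ N ≤ M on the open interval
  have key2 : ∀ a b : ℝ, 0 ≤ a → 0 ≤ S₂ a →
      (∀ t ∈ Ioo a b, 0 ≤ S₁ t ∧ 0 ≤ N t ∧ N t ≤ M) → ∀ t ∈ Icc a b, 0 ≤ S₂ t := by
    intro a b ha ha2 hreg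
    apply signpres S₂ (fun t => u t * f (S₁ t) - μ (S₂ t) * (M - S₁ t - S₂ t)) a b (Kμ * M) δμ hδμ
    · intro t ht
      exact ((hS₂ t (ha.trans ht.1)).continuousAt).continuousWithinAt
    · intro t ht
      exact hS₂ t (le_of_lt (ha.trans_lt ht.1))
    · intro t ht hge hle
      obtain ⟨hS1t, hN0, hNM⟩ := hreg t ht
      have habs : |S₂ t| ≤ δμ := abs_le.mpr ⟨hge, hle.trans hδμ.le⟩
      have h1 := hKμ _ habs
      have h2 : |S₂ t| = -(S₂ t) := abs_of_nonpos hle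
      rw [h2] at h1
      have hμle : μ (S₂ t) ≤ Kμ * (-(S₂ t)) := (le_abs_self _).trans h1
      have hVub : M - S₁ t - S₂ t ≤ M := by simp only [hNdef] at hN0; linarith
      have hVlb : 0 ≤ M - S₁ t - S₂ t := by simp only [hNdef] at hNM; linarith
      have hf1 : 0 ≤ u t * f (S₁ t) := mul_nonneg (hu t).1 (hfpos _ hS1t)
      nlinarith [mul_le_mul_of_nonneg_right hμle hVlb,
        mul_le_mul_of_nonneg_left hVub (mul_nonneg hKμ0 (neg_nonneg.mpr hle))]
    · exact ha2
  -- key 3 : strict lower bound for N on [0,b] given region on (0,b)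
  set β : ℝ := min (S₁ 0 + S₂ 0) δμ with hβdef
  have hβ0 : 0 < β := lt_min h0N hδμ
  set C : ℝ := Kμ * M with hCdef
  have hC0 : 0 ≤ C := mul_nonneg hKμ0 hM.le
  have key3 : ∀ b : ℝ, 0 ≤ b →
      (∀ t ∈ Ioo (0:ℝ) b, 0 ≤ S₁ t ∧ 0 ≤ S₂ t ∧ N t ≤ M) →
      ∀ t ∈ Icc (0:ℝ) b, β * Real.exp (-C * t) ≤ N t := by
    intro b hb hreg
    have hexp : ∀ t : ℝ, HasDerivAt (fun y : ℝ => β * Real.exp (-C * y))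
        (β * (Real.exp (-C * t) * -C)) t := by
      intro t
      have h1 : HasDerivAt (fun y : ℝ => -C * y) (-C) t := by
        simpa using (hasDerivAt_id t).const_mul (-C)
      exact (h1.exp).const_mul β
    have := signpres (fun t => N t - β * Real.exp (-C * t))
      (fun t => dN t - β * (Real.exp (-C * t) * -C)) 0 b (-C) β hβ0
      (fun t ht => (((hN t ht.1).sub (hexp t)).continuousAt).continuousWithinAt)
      (fun t ht => (hN t ht.1.le).sub (hexp t))
      ?_ ?_
    · intro t ht
      have h := this t ht
      beta_reduce at h
      linarith
    · intro t ht hge hle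
      beta_reduce at hge hle ⊢
      obtain ⟨hS1t, hS2t, hNM⟩ := hreg t ht
      have hE1 : Real.exp (-C * t) ≤ 1 := by
        apply Real.exp_le_one_iff.mpr
        nlinarith [ht.1.le]
      have hE0 : (0:ℝ) < Real.exp (-C * t) := Real.exp_pos _
      -- from y ≤ 0 : N t ≤ β * exp ≤ β ≤ δμ
      have hNub : N t ≤ β := by nlinarith [hβ0.le, hE1, hE0]
      have hS2ub : S₂ t ≤ δμ := by
        have : S₂ t ≤ N t := by simp only [hNdef]; linarith
        have hβδ : β ≤ δμ := min_le_right _ _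
        linarith
      have habs : |S₂ t| ≤ δμ := abs_le.mpr ⟨by linarith, hS2ub⟩
      have h1 := hKμ _ habs
      have h2 : |S₂ t| = S₂ t := abs_of_nonneg hS2t
      rw [h2] at h1
      have hμle : μ (S₂ t) ≤ Kμ * S₂ t := (le_abs_self _).trans h1
      have hμpos : 0 ≤ μ (S₂ t) := hμ_nonneg _ hS2t
      have hNN : 0 ≤ N t := by simp only [hNdef]; linarith
      have hV1 : 0 ≤ M - N t := by linarith
      -- goal : -C * (N t - β E) ≤ dN t - β * (E * -C)
      -- i.e. μ (S₂ t) * (M - N t) ≤ C * N t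
      have hkey : μ (S₂ t) * (M - N t) ≤ C * N t := by
        have hS2N : S₂ t ≤ N t := by simp only [hNdef]; linarith
        have ha : μ (S₂ t) ≤ Kμ * N t := by nlinarith
        calc μ (S₂ t) * (M - N t) ≤ μ (S₂ t) * M :=
              mul_le_mul_of_nonneg_left (by linarith) hμpos
          _ ≤ (Kμ * N t) * M := mul_le_mul_of_nonneg_right ha hM.le
          _ = C * N t := by rw [hCdef]; ring
      simp only [hdNdef]
      linarith [hkey]
    · show (0:ℝ) ≤ N 0 - β * Real.exp (-C * 0)
      have : β ≤ S₁ 0 + S₂ 0 := min_le_left _ _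
      simp only [neg_zero, zero_mul, mul_zero, Real.exp_zero, mul_one, hNdef]
      linarith
  -- key 4 : N nonincreasing-type upper bound on [0,b]
  have key4 : ∀ b : ℝ, 0 ≤ b →
      (∀ t ∈ Ioo (0:ℝ) b, 0 ≤ S₂ t ∧ N t ≤ M) →
      ∀ t ∈ Icc (0:ℝ) b, N t ≤ S₁ 0 + S₂ 0 := by
    intro b hb hreg
    have := signpres (fun t => (S₁ 0 + S₂ 0) - N t) (fun t => -(dN t)) 0 b 0 1 one_pos
      (fun t ht => ((continuousAt_const.sub (hN t ht.1).continuousAt)).continuousWithinAt)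
      (fun t ht => by have h := (hasDerivAt_const t (S₁ 0 + S₂ 0)).sub (hN t ht.1.le); rw [zero_sub] at h; exact h)
      ?_ ?_
    · intro t ht
      have h := this t ht
      beta_reduce at h
      linarith
    · intro t ht _ _
      beta_reduce
      obtain ⟨hS2t, hNM⟩ := hreg t ht
      have hμpos : 0 ≤ μ (S₂ t) := hμ_nonneg _ hS2t
      simp only [hdNdef, zero_mul, neg_neg]
      exact mul_nonneg hμpos (by linarith)
    · show (0:ℝ) ≤ (S₁ 0 + S₂ 0) - N 0
      simp only [hNdef, sub_self, le_refl]
  -- main continuous induction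
  intro T hT
  set B : Set ℝ := {t | t ∈ Icc 0 T ∧ ∀ s ∈ Icc (0:ℝ) t,
      0 ≤ S₁ s ∧ 0 ≤ S₂ s ∧ 0 < S₁ s + S₂ s ∧ S₁ s + S₂ s < M} with hBdef
  have hQ0 : 0 ≤ S₁ 0 ∧ 0 ≤ S₂ 0 ∧ 0 < S₁ 0 + S₂ 0 ∧ S₁ 0 + S₂ 0 < M := ⟨h01, h02, h0N, h0M⟩
  have hB0 : (0:ℝ) ∈ B := by
    refine ⟨⟨le_rfl, hT⟩, fun s hs => ?_⟩
    have : s = 0 := le_antisymm hs.2 hs.1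
    rw [this]; exact hQ0
  have hBbdd : BddAbove B := ⟨T, fun t ht => ht.1.2⟩
  have hBne : B.Nonempty := ⟨0, hB0⟩
  set c := sSup B with hcdef
  have hc0 : 0 ≤ c := le_csSup hBbdd hB0
  have hcT : c ≤ T := csSup_le hBne (fun t ht => ht.1.2)
  have hQlt : ∀ s : ℝ, 0 ≤ s → s < c →
      0 ≤ S₁ s ∧ 0 ≤ S₂ s ∧ 0 < S₁ s + S₂ s ∧ S₁ s + S₂ s < M := by
    intro s hs0 hsc
    obtain ⟨b, hbB, hsb⟩ := exists_lt_of_lt_csSup hBne hsc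
    exact hbB.2 s ⟨hs0, hsb.le⟩
  have hreg : ∀ t ∈ Ioo (0:ℝ) c, 0 ≤ S₁ t ∧ 0 ≤ S₂ t ∧ 0 ≤ N t ∧ N t ≤ M := by
    intro t ht
    obtain ⟨a1, a2, a3, a4⟩ := hQlt t ht.1.le ht.2
    exact ⟨a1, a2, by simp only [hNdef]; linarith, a4.le⟩
  -- Q holds at c
  have hQc : 0 ≤ S₁ c ∧ 0 ≤ S₂ c ∧ 0 < S₁ c + S₂ c ∧ S₁ c + S₂ c < M := by
    have hA := key1 0 c le_rfl h01 c ⟨hc0, le_rfl⟩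
    have hB' := key2 0 c le_rfl h02 (fun t ht => ⟨(hreg t ht).1, (hreg t ht).2.2.1,
      (hreg t ht).2.2.2⟩) c ⟨hc0, le_rfl⟩
    have hC' := key3 c hc0 (fun t ht => ⟨(hreg t ht).1, (hreg t ht).2.1,
      (hreg t ht).2.2.2⟩) c ⟨hc0, le_rfl⟩
    have hD' := key4 c hc0 (fun t ht => ⟨(hreg t ht).2.1, (hreg t ht).2.2.2⟩) c ⟨hc0, le_rfl⟩
    have hE0 : (0:ℝ) < Real.exp (-C * c) := Real.exp_pos _
    simp only [hNdef] at hC' hD'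
    refine ⟨hA, hB', by nlinarith, by linarith⟩
  have hcB : c ∈ B := by
    refine ⟨⟨hc0, hcT⟩, fun s hs => ?_⟩
    rcases lt_or_eq_of_le hs.2 with h | h
    · exact hQlt s hs.1 h
    · rw [h]; exact hQc
  -- c = T
  have hcT' : c = T := by
    by_contra hne
    have hcltT : c < T := lt_of_le_of_ne hcT hne
    -- openness : extend beyond c
    have hNcont : ContinuousAt N c := (hN c hc0).continuousAt
    have hNc : N c ∈ Ioo (0:ℝ) M := by
      simp only [hNdef, mem_Ioo]
      exact ⟨hQc.2.2.1, hQc.2.2.2⟩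
    have hev : ∀ᶠ t in nhds c, N t ∈ Ioo (0:ℝ) M :=
      hNcont.eventually_mem (isOpen_Ioo.mem_nhds hNc)
    obtain ⟨ε, hε, hball⟩ := Metric.eventually_nhds_iff.mp hev
    set d := min (c + ε/2) T with hddef
    have hcd : c < d := lt_min (by linarith) hcltT
    have hdT : d ≤ T := min_le_right _ _
    have hNd : ∀ t ∈ Icc c d, 0 < N t ∧ N t < M := by
      intro t ht
      have hdist : dist t c < ε := by
        rw [Real.dist_eq, abs_of_nonneg (by linarith [ht.1])]
        have : t ≤ c + ε/2 := ht.2.trans (min_le_left _ _)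
        linarith
      exact ⟨(hball hdist).1, (hball hdist).2⟩
    have hA := key1 c d hc0 hQc.1
    have hB' := key2 c d hc0 hQc.2.1 (fun t ht =>
      ⟨hA t ⟨ht.1.le, ht.2.le⟩, (hNd t ⟨ht.1.le, ht.2.le⟩).1.le, (hNd t ⟨ht.1.le, ht.2.le⟩).2.le⟩)
    have hdB : d ∈ B := by
      refine ⟨⟨hc0.trans hcd.le, hdT⟩, fun s hs => ?_⟩
      rcases le_or_gt s c with h | h
      · exact hcB.2 s ⟨hs.1, h⟩
      · have hsd : s ∈ Icc c d := ⟨h.le, hs.2⟩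
        have hNs := hNd s hsd
        simp only [hNdef] at hNs
        exact ⟨hA s hsd, hB' s hsd, hNs.1, hNs.2⟩
    have : d ≤ c := le_csSup hBbdd hdB
    linarith
  rw [← hcT']
  exact hQc
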